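/- Combined two-sided guarantee: under the main-bound setup with positive expected margin μ = ∑_i (2p_i-1)q_i > 0 and square-sum bound Σ = ∑_i ((T-1)(2p_i-1)²+4), the probability that the net vote V = μ + ∑_k D_k satisfies V > 0 is at least 1 - exp(-μ²/(2Σ)), and the probability that V' = -μ + ∑_k D'_k (the net vote under the wrong state) satisfies V' > 0 is at most exp(-μ²/(2Σ)); hence both the correctness probability and one minus the hallucination probability admit the same exponential guarantee. -/

import Mathlib

open MeasureTheory Filter

section AzumaAux
open Real

/-- convexity bound: for |x| ≤ c, exp (t*x) ≤ cosh (t*c) + (sinh (t*c)/c) * x. -/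
lemma exp_le_cosh_add {t c x : ℝ} (hc : 0 < c) (hx : |x| ≤ c) :
    exp (t * x) ≤ cosh (t * c) + sinh (t * c) / c * x := by
  have hx1 : -c ≤ x := (abs_le.mp hx).1
  have hx2 : x ≤ c := (abs_le.mp hx).2
  set a : ℝ := (c - x) / (2 * c) with ha_def
  set b : ℝ := (c + x) / (2 * c) with hb_def
  have ha : 0 ≤ a := div_nonneg (by linarith) (by linarith)
  have hb : 0 ≤ b := div_nonneg (by linarith) (by linarith)
  have hab : a + b = 1 := by rw [ha_def, hb_def, ← add_div, div_eq_one_iff_eq (by positivity)]; ring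
  have h := convexOn_exp.2 (Set.mem_univ (-(t * c))) (Set.mem_univ (t * c)) ha hb hab
  have harg : a • (-(t * c)) + b • (t * c) = t * x := by
    simp only [smul_eq_mul, ha_def, hb_def]
    field_simp
    ring
  rw [harg] at h
  refine h.trans (le_of_eq ?_)
  simp only [smul_eq_mul, Real.cosh_eq, Real.sinh_eq, ha_def, hb_def]
  field_simp
  ring

lemma mds_mgf_le
    {Ω : Type*} {m0 : MeasurableSpace Ω} {μ : Measure Ω} [IsProbabilityMeasure μ]
    (ℱ : Filtration ℕ m0) (D : ℕ → Ω → ℝ) (c : ℕ → ℝ)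
    (hadapted : ∀ k, StronglyMeasurable[ℱ (k + 1)] (D k))
    (hint : ∀ k, Integrable (D k) μ)
    (hzero : ∀ k, μ[D k | ℱ k] =ᵐ[μ] 0)
    (hc : ∀ k, 0 ≤ c k)
    (hbdd : ∀ k, ∀ᵐ ω ∂μ, |D k ω| ≤ c k) (t : ℝ) :
    ∀ K, ∫ ω, Real.exp (t * ∑ k ∈ Finset.range K, D k ω) ∂μ
      ≤ Real.exp (t ^ 2 / 2 * ∑ k ∈ Finset.range K, (c k) ^ 2) := by
  intro K
  induction K with
  | zero => simp
  | succ K ih =>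
    set S : Ω → ℝ := fun ω => ∑ k ∈ Finset.range K, D k ω with hS_def
    -- measurability of S w.r.t. ℱ K
    have hSmeas : StronglyMeasurable[ℱ K] S := by
      apply Finset.stronglyMeasurable_fun_sum
      intro k hk
      exact (hadapted k).mono (ℱ.mono (Finset.mem_range.mp hk))
    -- a.e. bound on S
    have hSbdd : ∀ᵐ ω ∂μ, |S ω| ≤ ∑ k ∈ Finset.range K, c k := by
      have h := ae_all_iff.mpr hbdd
      filter_upwards [h] with ω hω
      exact (Finset.abs_sum_le_sum_abs _ _).trans
        (Finset.sum_le_sum fun k _ => hω k)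
    set f : Ω → ℝ := fun ω => Real.exp (t * S ω) with hf_def
    set g : Ω → ℝ := fun ω => Real.exp (t * D K ω) with hg_def
    have hf_meas : StronglyMeasurable[ℱ K] f :=
      (Real.continuous_exp.comp_stronglyMeasurable (hSmeas.const_mul t))
    have hg_meas : StronglyMeasurable[ℱ (K+1)] g :=
      (Real.continuous_exp.comp_stronglyMeasurable ((hadapted K).const_mul t))
    -- integrability helper
    have key_int : ∀ (h : Ω → ℝ) (B : ℝ), StronglyMeasurable h →
        (∀ᵐ ω ∂μ, |h ω| ≤ B) → Integrable h μ := by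
      intro h B hm hb
      refine ⟨hm.aestronglyMeasurable, ?_⟩
      apply MeasureTheory.HasFiniteIntegral.of_bounded (C := B)
      simpa [Real.norm_eq_abs] using hb
    have hf_bdd : ∀ᵐ ω ∂μ, |f ω| ≤ Real.exp (|t| * ∑ k ∈ Finset.range K, c k) := by
      filter_upwards [hSbdd] with ω hω
      rw [abs_of_pos (Real.exp_pos _), Real.exp_le_exp]
      calc t * S ω ≤ |t * S ω| := le_abs_self _
        _ = |t| * |S ω| := abs_mul _ _
        _ ≤ |t| * ∑ k ∈ Finset.range K, c k := by
            exact mul_le_mul_of_nonneg_left hω (abs_nonneg t)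
    have hg_bdd : ∀ᵐ ω ∂μ, |g ω| ≤ Real.exp (|t| * c K) := by
      filter_upwards [hbdd K] with ω hω
      rw [abs_of_pos (Real.exp_pos _), Real.exp_le_exp]
      calc t * D K ω ≤ |t * D K ω| := le_abs_self _
        _ = |t| * |D K ω| := abs_mul _ _
        _ ≤ |t| * c K := mul_le_mul_of_nonneg_left hω (abs_nonneg t)
    have hf_int : Integrable f μ :=
      key_int f _ (hf_meas.mono (ℱ.le K)) hf_bdd
    have hg_int : Integrable g μ :=
      key_int g _ (hg_meas.mono (ℱ.le (K+1))) hg_bdd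
    have hfg_bdd : ∀ᵐ ω ∂μ, |f ω * g ω| ≤
        Real.exp (|t| * ∑ k ∈ Finset.range K, c k) * Real.exp (|t| * c K) := by
      filter_upwards [hf_bdd, hg_bdd] with ω h1 h2
      rw [abs_mul]
      exact mul_le_mul h1 h2 (abs_nonneg _) (Real.exp_pos _).le
    have hfg_int : Integrable (f * g) μ :=
      key_int _ _ ((hf_meas.mono (ℱ.le K)).mul (hg_meas.mono (ℱ.le (K+1)))) hfg_bdd
    -- conditional Hoeffding: μ[g | ℱ K] ≤ᵐ exp(t² c K²/2)
    set r : ℝ := if c K = 0 then 0 else Real.sinh (t * c K) / c K with hr_def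
    have hpt : ∀ᵐ ω ∂μ, g ω ≤ Real.cosh (t * c K) + r * D K ω := by
      filter_upwards [hbdd K] with ω hω
      rcases eq_or_lt_of_le (hc K) with h0 | h0
      · have : D K ω = 0 := by
          rw [← h0] at hω; exact abs_eq_zero.mp (le_antisymm hω (abs_nonneg _))
        simp [hg_def, this, ← h0, Real.cosh_zero]
      · rw [hr_def, if_neg h0.ne']
        exact exp_le_cosh_add h0 hω
    have hh_int : Integrable (fun ω => Real.cosh (t * c K) + r * D K ω) μ :=
      (integrable_const _).add ((hint K).const_mul r)
    have hcond : μ[g | ℱ K] ≤ᵐ[μ] fun _ => Real.exp (t ^ 2 / 2 * (c K) ^ 2) := by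
      have h1 : μ[g | ℱ K] ≤ᵐ[μ] μ[fun ω => Real.cosh (t * c K) + r * D K ω | ℱ K] :=
        condExp_mono hg_int hh_int hpt
      have h2 : μ[fun ω => Real.cosh (t * c K) + r * D K ω | ℱ K]
          =ᵐ[μ] fun _ => Real.cosh (t * c K) := by
        have ha : μ[fun ω => Real.cosh (t * c K) + r * D K ω | ℱ K]
            =ᵐ[μ] μ[fun _ => Real.cosh (t * c K) | ℱ K] + μ[fun ω => r * D K ω | ℱ K] :=
          condExp_add (integrable_const _) ((hint K).const_mul r) _
        have hb : μ[fun _ : Ω => Real.cosh (t * c K) | ℱ K]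
            = fun _ => Real.cosh (t * c K) := condExp_const (ℱ.le K) _
        have hd : μ[fun ω => r * D K ω | ℱ K] =ᵐ[μ] fun _ => (0 : ℝ) := by
          have := condExp_smul (μ := μ) (m := ℱ K) r (D K)
          refine this.trans ?_
          filter_upwards [hzero K] with ω hω
          simp [hω]
        filter_upwards [ha, hd] with ω hω1 hω2
        simp only [hω1, Pi.add_apply, hb, hω2, add_zero]
      have h3 : Real.cosh (t * c K) ≤ Real.exp (t ^ 2 / 2 * (c K) ^ 2) := by
        refine (Real.cosh_le_exp_half_sq _).trans (Real.exp_le_exp.mpr (le_of_eq ?_))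
        ring
      filter_upwards [h1, h2] with ω hω1 hω2
      exact (hω1.trans_eq hω2).trans h3
    -- main computation
    have hsum : ∀ ω, Real.exp (t * ∑ k ∈ Finset.range (K+1), D k ω) = f ω * g ω := by
      intro ω
      rw [Finset.sum_range_succ, mul_add, Real.exp_add]
    calc ∫ ω, Real.exp (t * ∑ k ∈ Finset.range (K+1), D k ω) ∂μ
        = ∫ ω, (f * g) ω ∂μ := by
          exact integral_congr_ae (Filter.Eventually.of_forall hsum)
      _ = ∫ ω, (μ[f * g | ℱ K]) ω ∂μ := (integral_condExp (ℱ.le K)).symm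
      _ = ∫ ω, f ω * (μ[g | ℱ K]) ω ∂μ := by
          refine integral_congr_ae ?_
          filter_upwards [condExp_mul_of_stronglyMeasurable_left hf_meas hfg_int hg_int] with ω hω
          exact hω
      _ ≤ ∫ ω, f ω * Real.exp (t ^ 2 / 2 * (c K) ^ 2) ∂μ := by
          refine integral_mono_ae ?_ (hf_int.mul_const _) ?_
          · exact Integrable.bdd_mul (integrable_condExp)
              (hf_meas.mono (ℱ.le K)).aestronglyMeasurable
              (by simpa [Real.norm_eq_abs] using hf_bdd)
          · filter_upwards [hcond] with ω hω
            exact mul_le_mul_of_nonneg_left hω (Real.exp_pos _).le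
      _ = (∫ ω, f ω ∂μ) * Real.exp (t ^ 2 / 2 * (c K) ^ 2) := integral_mul_const _ _
      _ ≤ Real.exp (t ^ 2 / 2 * ∑ k ∈ Finset.range K, (c k) ^ 2)
            * Real.exp (t ^ 2 / 2 * (c K) ^ 2) := by
          exact mul_le_mul_of_nonneg_right ih (Real.exp_pos _).le
      _ = Real.exp (t ^ 2 / 2 * ∑ k ∈ Finset.range (K+1), (c k) ^ 2) := by
          rw [← Real.exp_add, Finset.sum_range_succ, mul_add]

lemma mds_tail
    {Ω : Type*} {m0 : MeasurableSpace Ω} {μ : Measure Ω} [IsProbabilityMeasure μ]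
    (ℱ : Filtration ℕ m0) (D : ℕ → Ω → ℝ) (c : ℕ → ℝ) (K : ℕ)
    (hadapted : ∀ k, StronglyMeasurable[ℱ (k + 1)] (D k))
    (hint : ∀ k, Integrable (D k) μ)
    (hzero : ∀ k, μ[D k | ℱ k] =ᵐ[μ] 0)
    (hc : ∀ k, 0 ≤ c k)
    (hbdd : ∀ k, ∀ᵐ ω ∂μ, |D k ω| ≤ c k)
    (ε : ℝ) (hε : 0 < ε) (hSq : 0 < ∑ k ∈ Finset.range K, (c k) ^ 2) :
    μ {ω | ε ≤ ∑ k ∈ Finset.range K, D k ω}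
      ≤ ENNReal.ofReal (Real.exp (-ε ^ 2 / (2 * ∑ k ∈ Finset.range K, (c k) ^ 2))) := by
  set Sq : ℝ := ∑ k ∈ Finset.range K, (c k) ^ 2 with hSqdef
  set t : ℝ := ε / Sq with ht_def
  have ht : 0 < t := div_pos hε hSq
  set S : Ω → ℝ := fun ω => ∑ k ∈ Finset.range K, D k ω with hS_def
  have hSmeas : StronglyMeasurable S :=
    Finset.stronglyMeasurable_fun_sum _ fun k _ => (hadapted k).mono (ℱ.le (k+1))
  have hSbdd : ∀ᵐ ω ∂μ, |S ω| ≤ ∑ k ∈ Finset.range K, c k := by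
    filter_upwards [ae_all_iff.mpr hbdd] with ω hω
    exact (Finset.abs_sum_le_sum_abs _ _).trans (Finset.sum_le_sum fun k _ => hω k)
  have h_int : Integrable (fun ω => Real.exp (t * S ω)) μ := by
    refine ⟨(Real.continuous_exp.comp_stronglyMeasurable
      (hSmeas.const_mul t)).aestronglyMeasurable, ?_⟩
    apply MeasureTheory.HasFiniteIntegral.of_bounded
      (C := Real.exp (|t| * ∑ k ∈ Finset.range K, c k))
    filter_upwards [hSbdd] with ω hω
    rw [Real.norm_eq_abs, abs_of_pos (Real.exp_pos _), Real.exp_le_exp]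
    calc t * S ω ≤ |t * S ω| := le_abs_self _
      _ = |t| * |S ω| := abs_mul _ _
      _ ≤ |t| * ∑ k ∈ Finset.range K, c k :=
          mul_le_mul_of_nonneg_left hω (abs_nonneg t)
  have hmgf : ProbabilityTheory.mgf S μ t ≤ Real.exp (t ^ 2 / 2 * Sq) :=
    mds_mgf_le ℱ D c hadapted hint hzero hc hbdd t K
  have h1 := ProbabilityTheory.measure_ge_le_exp_mul_mgf (X := S) (μ := μ) ε ht.le h_int
  have h2 : Real.exp (-t * ε) * ProbabilityTheory.mgf S μ t
      ≤ Real.exp (-ε ^ 2 / (2 * Sq)) := by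
    calc Real.exp (-t * ε) * ProbabilityTheory.mgf S μ t
        ≤ Real.exp (-t * ε) * Real.exp (t ^ 2 / 2 * Sq) :=
          mul_le_mul_of_nonneg_left hmgf (Real.exp_pos _).le
      _ = Real.exp (-t * ε + t ^ 2 / 2 * Sq) := (Real.exp_add _ _).symm
      _ = Real.exp (-ε ^ 2 / (2 * Sq)) := by
          congr 1
          rw [ht_def]
          field_simp
          ring
  have := h1.trans h2
  calc μ {ω | ε ≤ S ω} = ENNReal.ofReal ((μ {ω | ε ≤ S ω}).toReal) :=
        (ENNReal.ofReal_toReal (measure_ne_top μ _)).symm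
    _ ≤ ENNReal.ofReal (Real.exp (-ε ^ 2 / (2 * Sq))) := ENNReal.ofReal_le_ofReal this

end AzumaAux

/-- Combined two-sided guarantee: with positive expected margin
`μ̄ = ∑ (2p_i-1)q_i > 0` and square-sum `Σ = ∑ ((T-1)(2p_i-1)²+4)`, the net vote
under the true state `V = μ̄ + ∑ D_k` satisfies
`P(V > 0) ≥ 1 - exp(-μ̄²/(2Σ))`, and the net vote under the wrong state
`V' = -μ̄ + ∑ D'_k` satisfies `P(V' > 0) ≤ exp(-μ̄²/(2Σ))`. -/
theorem two_sided_guarantee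
    {Ω : Type*} {m0 : MeasurableSpace Ω} {μ : Measure Ω} [IsProbabilityMeasure μ]
    (ℱ ℱ' : Filtration ℕ m0) (K N T : ℕ) (hT : 1 ≤ T)
    (D D' : ℕ → Ω → ℝ) (c : ℕ → ℝ) (p q : ℕ → ℝ) (m : ℝ) (V V' : Ω → ℝ)
    (hadapted : ∀ k, StronglyMeasurable[ℱ (k + 1)] (D k))
    (hadapted' : ∀ k, StronglyMeasurable[ℱ' (k + 1)] (D' k))
    (hint : ∀ k, Integrable (D k) μ) (hint' : ∀ k, Integrable (D' k) μ)
    (hzero : ∀ k, μ[D k | ℱ k] =ᵐ[μ] 0)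
    (hzero' : ∀ k, μ[D' k | ℱ' k] =ᵐ[μ] 0)
    (hc : ∀ k, 0 ≤ c k)
    (hbdd : ∀ k, ∀ᵐ ω ∂μ, |D k ω| ≤ c k)
    (hbdd' : ∀ k, ∀ᵐ ω ∂μ, |D' k ω| ≤ c k)
    (hp : ∀ i, 0 ≤ p i ∧ p i ≤ 1) (hq : ∀ i, 0 ≤ q i ∧ q i ≤ 1)
    (hm : m = ∑ i ∈ Finset.range N, (2 * p i - 1) * q i) (hmpos : 0 < m)
    (hsq : ∑ k ∈ Finset.range K, (c k) ^ 2
        = ∑ i ∈ Finset.range N, (((T : ℝ) - 1) * (2 * p i - 1) ^ 2 + 4))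
    (hV : ∀ ω, V ω = m + ∑ k ∈ Finset.range K, D k ω)
    (hV' : ∀ ω, V' ω = -m + ∑ k ∈ Finset.range K, D' k ω) :
    μ {ω | 0 < V ω}
        ≥ ENNReal.ofReal (1 - Real.exp (-m ^ 2 /
            (2 * ∑ i ∈ Finset.range N, (((T : ℝ) - 1) * (2 * p i - 1) ^ 2 + 4))))
    ∧ μ {ω | 0 < V' ω}
        ≤ ENNReal.ofReal (Real.exp (-m ^ 2 /
            (2 * ∑ i ∈ Finset.range N, (((T : ℝ) - 1) * (2 * p i - 1) ^ 2 + 4)))) := by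
  -- positivity of the square sum
  have hN : N ≠ 0 := by
    intro h
    rw [h] at hm
    simp at hm
    exact absurd hm (by intro h'; rw [h'] at hmpos; exact lt_irrefl 0 hmpos)
  have hT1 : (0 : ℝ) ≤ (T : ℝ) - 1 := by
    have : (1 : ℝ) ≤ (T : ℝ) := by exact_mod_cast hT
    linarith
  have hSqpos : 0 < ∑ i ∈ Finset.range N, (((T : ℝ) - 1) * (2 * p i - 1) ^ 2 + 4) := by
    refine Finset.sum_pos (fun i _ => ?_) (Finset.nonempty_range_iff.mpr hN)
    have : 0 ≤ ((T : ℝ) - 1) * (2 * p i - 1) ^ 2 := mul_nonneg hT1 (sq_nonneg _)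
    linarith
  have hcsq : 0 < ∑ k ∈ Finset.range K, (c k) ^ 2 := hsq ▸ hSqpos
  constructor
  · -- lower bound for correct state
    have htail := mds_tail ℱ (fun k => -(D k)) c K
      (fun k => (hadapted k).neg) (fun k => (hint k).neg)
      (fun k => ((condExp_neg (D k) _).trans (by filter_upwards [hzero k] with ω hω; simp [hω])))
      hc (fun k => by filter_upwards [hbdd k] with ω hω; simpa using hω)
      m hmpos hcsq
    rw [hsq] at htail
    have hset : {ω | m ≤ ∑ k ∈ Finset.range K, (fun k => -(D k)) k ω}
        = {ω | V ω ≤ 0} := by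
      ext ω
      have hsum : ∑ k ∈ Finset.range K, (fun k => -(D k)) k ω
          = -∑ k ∈ Finset.range K, D k ω := by
        simp
      simp only [Set.mem_setOf_eq, hV ω, hsum]
      constructor <;> intro h <;> linarith
    rw [hset] at htail
    have hVmeas : Measurable V := by
      have : V = fun ω => m + ∑ k ∈ Finset.range K, D k ω := funext hV
      rw [this]
      exact measurable_const.add
        (Finset.measurable_sum _ fun k _ => ((hadapted k).mono (ℱ.le (k+1))).measurable)
    have hBmeas : MeasurableSet {ω | V ω ≤ 0} :=
      measurableSet_le hVmeas measurable_const
    have hcompl : {ω | 0 < V ω} = {ω | V ω ≤ 0}ᶜ := by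
      ext ω; simp [not_le]
    rw [ge_iff_le, hcompl, prob_compl_eq_one_sub hBmeas]
    have hexp : (0:ℝ) ≤ Real.exp (-m ^ 2 /
        (2 * ∑ i ∈ Finset.range N, (((T : ℝ) - 1) * (2 * p i - 1) ^ 2 + 4))) :=
      (Real.exp_pos _).le
    rw [ENNReal.ofReal_sub _ hexp, ENNReal.ofReal_one]
    exact tsub_le_tsub_left htail 1
  · -- upper bound for wrong state
    have htail := mds_tail ℱ' D' c K hadapted' hint' hzero' hc hbdd' m hmpos hcsq
    rw [hsq] at htail
    refine le_trans (measure_mono ?_) htail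
    intro ω hω
    simp only [Set.mem_setOf_eq, hV' ω] at hω ⊢
    linarith
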